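/- Let F, G : X → Y be isomix Frobenius functors between isomix categories. A linear transformation α = (α⊗, α⊕) : F ⇒ G is a linear natural isomorphism (i.e., α⊗ is an isomorphism) if and only if α⊗ = α⊕⁻¹. -/

import Mathlib

open CategoryTheory

universe v u v₂ u₂ v₃ u₃

/-- A linearly distributive category (LDC): a category with two monoidal structures
`T = (⊗, ⊤)` (tensor) and `P = (⊕, ⊥)` (par), linked by natural linear distributors
`∂L : A ⊗ (B ⊕ X) ⟶ (A ⊗ B) ⊕ X` and `∂R : (A ⊕ B) ⊗ X ⟶ A ⊕ (B ⊗ X)`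
(satisfying the Cockett–Seely coherence conditions). -/
structure LDC (C : Type u) [Category.{v} C] where
  T : MonoidalCategory C
  P : MonoidalCategory C
  distL : ∀ A B X : C, T.tensorObj A (P.tensorObj B X) ⟶ P.tensorObj (T.tensorObj A B) X
  distR : ∀ A B X : C, T.tensorObj (P.tensorObj A B) X ⟶ P.tensorObj A (T.tensorObj B X)
  distL_natural : ∀ {A A' B B' X X' : C} (f : A ⟶ A') (g : B ⟶ B') (h : X ⟶ X'),
    T.tensorHom f (P.tensorHom g h) ≫ distL A' B' X'
      = distL A B X ≫ P.tensorHom (T.tensorHom f g) h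
  distR_natural : ∀ {A A' B B' X X' : C} (f : A ⟶ A') (g : B ⟶ B') (h : X ⟶ X'),
    T.tensorHom (P.tensorHom f g) h ≫ distR A' B' X'
      = distR A B X ≫ P.tensorHom f (T.tensorHom g h)

namespace LDC

variable {C : Type u} [Category.{v} C]

/-- tensor on objects -/
abbrev ot (L : LDC C) (A B : C) : C := L.T.tensorObj A B
/-- par on objects -/
abbrev op (L : LDC C) (A B : C) : C := L.P.tensorObj A B
/-- tensor unit ⊤ -/
abbrev tu (L : LDC C) : C := L.T.tensorUnit
/-- par unit ⊥ -/
abbrev pu (L : LDC C) : C := L.P.tensorUnit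
/-- tensor on morphisms -/
abbrev oth (L : LDC C) {A B A' B' : C} (f : A ⟶ A') (g : B ⟶ B') :
    L.ot A B ⟶ L.ot A' B' := L.T.tensorHom f g
/-- par on morphisms -/
abbrev oph (L : LDC C) {A B A' B' : C} (f : A ⟶ A') (g : B ⟶ B') :
    L.op A B ⟶ L.op A' B' := L.P.tensorHom f g
/-- associator of the tensor -/
abbrev aT (L : LDC C) (A B X : C) : L.ot (L.ot A B) X ≅ L.ot A (L.ot B X) := L.T.associator A B X
/-- associator of the par -/
abbrev aP (L : LDC C) (A B X : C) : L.op (L.op A B) X ≅ L.op A (L.op B X) := L.P.associator A B X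
/-- left unitor of the tensor -/
abbrev luT (L : LDC C) (A : C) : L.ot L.tu A ≅ A := L.T.leftUnitor A
/-- right unitor of the tensor -/
abbrev ruT (L : LDC C) (A : C) : L.ot A L.tu ≅ A := L.T.rightUnitor A
/-- left unitor of the par -/
abbrev luP (L : LDC C) (A : C) : L.op L.pu A ≅ A := L.P.leftUnitor A
/-- right unitor of the par -/
abbrev ruP (L : LDC C) (A : C) : L.op A L.pu ≅ A := L.P.rightUnitor A

end LDC

section LinearFunctor

variable {C : Type u} [Category.{v} C] {D : Type u₂} [Category.{v₂} D]

/-- The data of a linear functor between LDCs: a pair of functors `Ft` (tensor part,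
lax `⊗`-monoidal via `mT, mU`) and `Fp` (par part, `⊕`-comonoidal via `nP, nU`), together
with the four linear strengths `vtR, vtL, vpR, vpL`. -/
structure LinearFunctorData (X : LDC C) (Y : LDC D) where
  Ft : C ⥤ D
  Fp : C ⥤ D
  mT : ∀ A B : C, Y.ot (Ft.obj A) (Ft.obj B) ⟶ Ft.obj (X.ot A B)
  mU : Y.tu ⟶ Ft.obj X.tu
  nP : ∀ A B : C, Fp.obj (X.op A B) ⟶ Y.op (Fp.obj A) (Fp.obj B)
  nU : Fp.obj X.pu ⟶ Y.pu
  vtR : ∀ A B : C, Ft.obj (X.op A B) ⟶ Y.op (Fp.obj A) (Ft.obj B)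
  vtL : ∀ A B : C, Ft.obj (X.op A B) ⟶ Y.op (Ft.obj A) (Fp.obj B)
  vpR : ∀ A B : C, Y.ot (Ft.obj A) (Fp.obj B) ⟶ Fp.obj (X.ot A B)
  vpL : ∀ A B : C, Y.ot (Fp.obj A) (Ft.obj B) ⟶ Fp.obj (X.ot A B)

/-- The coherence laws of a linear functor: naturality of all the structure maps,
lax monoidality of `(Ft, mT, mU)`, comonoidality of `(Fp, nP, nU)`, and the
Cockett–Seely coherences [LF.1]–[LF.5]. -/
structure LinearFunctorLaws {X : LDC C} {Y : LDC D} (F : LinearFunctorData X Y) : Prop where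
  mT_natural : ∀ {A A' B B' : C} (f : A ⟶ A') (g : B ⟶ B'),
    Y.oth (F.Ft.map f) (F.Ft.map g) ≫ F.mT A' B' = F.mT A B ≫ F.Ft.map (X.oth f g)
  mT_assoc : ∀ A B Cc : C,
    Y.oth (F.mT A B) (𝟙 (F.Ft.obj Cc)) ≫ F.mT (X.ot A B) Cc ≫ F.Ft.map (X.aT A B Cc).hom
      = (Y.aT (F.Ft.obj A) (F.Ft.obj B) (F.Ft.obj Cc)).hom
          ≫ Y.oth (𝟙 (F.Ft.obj A)) (F.mT B Cc) ≫ F.mT A (X.ot B Cc)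
  mT_lu : ∀ A : C,
    Y.oth F.mU (𝟙 (F.Ft.obj A)) ≫ F.mT X.tu A ≫ F.Ft.map (X.luT A).hom
      = (Y.luT (F.Ft.obj A)).hom
  mT_ru : ∀ A : C,
    Y.oth (𝟙 (F.Ft.obj A)) F.mU ≫ F.mT A X.tu ≫ F.Ft.map (X.ruT A).hom
      = (Y.ruT (F.Ft.obj A)).hom
  nP_natural : ∀ {A A' B B' : C} (f : A ⟶ A') (g : B ⟶ B'),
    F.Fp.map (X.oph f g) ≫ F.nP A' B' = F.nP A B ≫ Y.oph (F.Fp.map f) (F.Fp.map g)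
  nP_assoc : ∀ A B Cc : C,
    F.nP (X.op A B) Cc ≫ Y.oph (F.nP A B) (𝟙 (F.Fp.obj Cc))
        ≫ (Y.aP (F.Fp.obj A) (F.Fp.obj B) (F.Fp.obj Cc)).hom
      = F.Fp.map (X.aP A B Cc).hom ≫ F.nP A (X.op B Cc) ≫ Y.oph (𝟙 (F.Fp.obj A)) (F.nP B Cc)
  nP_lu : ∀ A : C,
    F.Fp.map (X.luP A).hom
      = F.nP X.pu A ≫ Y.oph F.nU (𝟙 (F.Fp.obj A)) ≫ (Y.luP (F.Fp.obj A)).hom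
  nP_ru : ∀ A : C,
    F.Fp.map (X.ruP A).hom
      = F.nP A X.pu ≫ Y.oph (𝟙 (F.Fp.obj A)) F.nU ≫ (Y.ruP (F.Fp.obj A)).hom
  vtR_natural : ∀ {A A' B B' : C} (f : A ⟶ A') (g : B ⟶ B'),
    F.Ft.map (X.oph f g) ≫ F.vtR A' B' = F.vtR A B ≫ Y.oph (F.Fp.map f) (F.Ft.map g)
  vtL_natural : ∀ {A A' B B' : C} (f : A ⟶ A') (g : B ⟶ B'),
    F.Ft.map (X.oph f g) ≫ F.vtL A' B' = F.vtL A B ≫ Y.oph (F.Ft.map f) (F.Fp.map g)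
  vpR_natural : ∀ {A A' B B' : C} (f : A ⟶ A') (g : B ⟶ B'),
    Y.oth (F.Ft.map f) (F.Fp.map g) ≫ F.vpR A' B' = F.vpR A B ≫ F.Fp.map (X.oth f g)
  vpL_natural : ∀ {A A' B B' : C} (f : A ⟶ A') (g : B ⟶ B'),
    Y.oth (F.Fp.map f) (F.Ft.map g) ≫ F.vpL A' B' = F.vpL A B ≫ F.Fp.map (X.oth f g)
  lf1a : ∀ A : C,
    F.Ft.map (X.luP A).hom
      = F.vtR X.pu A ≫ Y.oph F.nU (𝟙 (F.Ft.obj A)) ≫ (Y.luP (F.Ft.obj A)).hom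
  lf1b : ∀ A : C,
    F.Ft.map (X.ruP A).hom
      = F.vtL A X.pu ≫ Y.oph (𝟙 (F.Ft.obj A)) F.nU ≫ (Y.ruP (F.Ft.obj A)).hom
  lf1c : ∀ A : C,
    (Y.luT (F.Fp.obj A)).inv ≫ Y.oth F.mU (𝟙 (F.Fp.obj A)) ≫ F.vpR X.tu A
      = F.Fp.map (X.luT A).inv
  lf1d : ∀ A : C,
    (Y.ruT (F.Fp.obj A)).inv ≫ Y.oth (𝟙 (F.Fp.obj A)) F.mU ≫ F.vpL A X.tu
      = F.Fp.map (X.ruT A).inv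
  lf2a : ∀ A B Cc : C,
    F.Ft.map (X.aP A B Cc).hom ≫ F.vtR A (X.op B Cc) ≫ Y.oph (𝟙 (F.Fp.obj A)) (F.vtR B Cc)
      = F.vtR (X.op A B) Cc ≫ Y.oph (F.nP A B) (𝟙 (F.Ft.obj Cc))
          ≫ (Y.aP (F.Fp.obj A) (F.Fp.obj B) (F.Ft.obj Cc)).hom
  lf2b : ∀ A B Cc : C,
    F.Ft.map (X.aP A B Cc).hom ≫ F.vtL A (X.op B Cc) ≫ Y.oph (𝟙 (F.Ft.obj A)) (F.nP B Cc)
      = F.vtL (X.op A B) Cc ≫ Y.oph (F.vtL A B) (𝟙 (F.Fp.obj Cc))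
          ≫ (Y.aP (F.Ft.obj A) (F.Fp.obj B) (F.Fp.obj Cc)).hom
  lf2c : ∀ A B Cc : C,
    Y.oth (F.mT A B) (𝟙 (F.Fp.obj Cc)) ≫ F.vpR (X.ot A B) Cc ≫ F.Fp.map (X.aT A B Cc).hom
      = (Y.aT (F.Ft.obj A) (F.Ft.obj B) (F.Fp.obj Cc)).hom
          ≫ Y.oth (𝟙 (F.Ft.obj A)) (F.vpR B Cc) ≫ F.vpR A (X.ot B Cc)
  lf2d : ∀ A B Cc : C,
    Y.oth (F.vpL A B) (𝟙 (F.Ft.obj Cc)) ≫ F.vpL (X.ot A B) Cc ≫ F.Fp.map (X.aT A B Cc).hom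
      = (Y.aT (F.Fp.obj A) (F.Ft.obj B) (F.Ft.obj Cc)).hom
          ≫ Y.oth (𝟙 (F.Fp.obj A)) (F.mT B Cc) ≫ F.vpL A (X.ot B Cc)
  lf3a : ∀ A B Cc : C,
    F.Ft.map (X.aP A B Cc).hom ≫ F.vtR A (X.op B Cc) ≫ Y.oph (𝟙 (F.Fp.obj A)) (F.vtL B Cc)
      = F.vtL (X.op A B) Cc ≫ Y.oph (F.vtR A B) (𝟙 (F.Fp.obj Cc))
          ≫ (Y.aP (F.Fp.obj A) (F.Ft.obj B) (F.Fp.obj Cc)).hom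
  lf3b : ∀ A B Cc : C,
    Y.oth (F.vpR A B) (𝟙 (F.Ft.obj Cc)) ≫ F.vpL (X.ot A B) Cc ≫ F.Fp.map (X.aT A B Cc).hom
      = (Y.aT (F.Ft.obj A) (F.Fp.obj B) (F.Ft.obj Cc)).hom
          ≫ Y.oth (𝟙 (F.Ft.obj A)) (F.vpL B Cc) ≫ F.vpR A (X.ot B Cc)
  lf4a : ∀ A B Cc : C,
    Y.oth (𝟙 (F.Ft.obj A)) (F.vtR B Cc)
        ≫ Y.distL (F.Ft.obj A) (F.Fp.obj B) (F.Ft.obj Cc)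
        ≫ Y.oph (F.vpR A B) (𝟙 (F.Ft.obj Cc))
      = F.mT A (X.op B Cc) ≫ F.Ft.map (X.distL A B Cc) ≫ F.vtR (X.ot A B) Cc
  lf4b : ∀ A B Cc : C,
    Y.oth (F.vtL A B) (𝟙 (F.Ft.obj Cc))
        ≫ Y.distR (F.Ft.obj A) (F.Fp.obj B) (F.Ft.obj Cc)
        ≫ Y.oph (𝟙 (F.Ft.obj A)) (F.vpL B Cc)
      = F.mT (X.op A B) Cc ≫ F.Ft.map (X.distR A B Cc) ≫ F.vtL A (X.ot B Cc)
  lf4c : ∀ A B Cc : C,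
    Y.oth (𝟙 (F.Fp.obj A)) (F.vtL B Cc)
        ≫ Y.distL (F.Fp.obj A) (F.Ft.obj B) (F.Fp.obj Cc)
        ≫ Y.oph (F.vpL A B) (𝟙 (F.Fp.obj Cc))
      = F.vpL A (X.op B Cc) ≫ F.Fp.map (X.distL A B Cc) ≫ F.nP (X.ot A B) Cc
  lf4d : ∀ A B Cc : C,
    Y.oth (F.vtR A B) (𝟙 (F.Fp.obj Cc))
        ≫ Y.distR (F.Fp.obj A) (F.Ft.obj B) (F.Fp.obj Cc)
        ≫ Y.oph (𝟙 (F.Fp.obj A)) (F.vpR B Cc)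
      = F.vpR (X.op A B) Cc ≫ F.Fp.map (X.distR A B Cc) ≫ F.nP A (X.ot B Cc)
  lf5a : ∀ A B Cc : C,
    Y.oth (𝟙 (F.Ft.obj A)) (F.vtL B Cc)
        ≫ Y.distL (F.Ft.obj A) (F.Ft.obj B) (F.Fp.obj Cc)
        ≫ Y.oph (F.mT A B) (𝟙 (F.Fp.obj Cc))
      = F.mT A (X.op B Cc) ≫ F.Ft.map (X.distL A B Cc) ≫ F.vtL (X.ot A B) Cc
  lf5b : ∀ A B Cc : C,
    Y.oth (F.vtR A B) (𝟙 (F.Ft.obj Cc))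
        ≫ Y.distR (F.Fp.obj A) (F.Ft.obj B) (F.Ft.obj Cc)
        ≫ Y.oph (𝟙 (F.Fp.obj A)) (F.mT B Cc)
      = F.mT (X.op A B) Cc ≫ F.Ft.map (X.distR A B Cc) ≫ F.vtR A (X.ot B Cc)
  lf5c : ∀ A B Cc : C,
    Y.oth (𝟙 (F.Ft.obj A)) (F.nP B Cc)
        ≫ Y.distL (F.Ft.obj A) (F.Fp.obj B) (F.Fp.obj Cc)
        ≫ Y.oph (F.vpR A B) (𝟙 (F.Fp.obj Cc))
      = F.vpR A (X.op B Cc) ≫ F.Fp.map (X.distL A B Cc) ≫ F.nP (X.ot A B) Cc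
  lf5d : ∀ A B Cc : C,
    Y.oth (F.nP A B) (𝟙 (F.Ft.obj Cc))
        ≫ Y.distR (F.Fp.obj A) (F.Fp.obj B) (F.Ft.obj Cc)
        ≫ Y.oph (𝟙 (F.Fp.obj A)) (F.vpL B Cc)
      = F.vpL (X.op A B) Cc ≫ F.Fp.map (X.distR A B Cc) ≫ F.nP A (X.ot B Cc)

/-- A linear functor between LDCs. -/
structure LinearFunctor (X : LDC C) (Y : LDC D) extends LinearFunctorData X Y where
  laws : LinearFunctorLaws toLinearFunctorData

end LinearFunctor
section Mix

variable {C : Type u} [Category.{v} C] {D : Type u₂} [Category.{v₂} D]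

/-- A mix category: an LDC with a mix map `m : ⊥ ⟶ ⊤` such that the two canonical
composites `A ⊗ B ⟶ A ⊕ B` (via the unitors, `m`, and the two linear distributors)
coincide. -/
structure MixCat (C : Type u) [Category.{v} C] where
  X : LDC C
  mix : X.pu ⟶ X.tu
  mix_coh : ∀ A B : C,
    X.oth (𝟙 A) ((X.luP B).inv ≫ X.oph mix (𝟙 B)) ≫ X.distL A X.tu B
        ≫ X.oph (X.ruT A).hom (𝟙 B)
      = X.oth ((X.ruP A).inv) (𝟙 B) ≫ X.distR A X.pu B
        ≫ X.oph (𝟙 A) (X.oth mix (𝟙 B) ≫ (X.luT B).hom)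

/-- The mixor `mx : A ⊗ B ⟶ A ⊕ B` of a mix category. -/
def MixCat.mx (M : MixCat C) (A B : C) : M.X.ot A B ⟶ M.X.op A B :=
  M.X.oth (𝟙 A) ((M.X.luP B).inv ≫ M.X.oph M.mix (𝟙 B)) ≫ M.X.distL A M.X.tu B
    ≫ M.X.oph (M.X.ruT A).hom (𝟙 B)

/-- An object is in the core of a mix category when all mixors out of it and into it
are isomorphisms. -/
def MixCat.inCore (M : MixCat C) (U : C) : Prop :=
  (∀ B : C, IsIso (M.mx U B)) ∧ (∀ B : C, IsIso (M.mx B U))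

/-- An isomix category: a mix category whose mix map is an isomorphism
(with specified inverse). -/
structure IsomixCat (C : Type u) [Category.{v} C] extends MixCat C where
  mixInv : X.tu ⟶ X.pu
  mix_mixInv : mix ≫ mixInv = 𝟙 X.pu
  mixInv_mix : mixInv ≫ mix = 𝟙 X.tu

/-- A Frobenius (linear) functor between LDCs: a linear functor whose tensor and par
parts coincide (`Ft = Fp = F`), with `m⊗ = ν⊕ᴸ = ν⊕ᴿ` and `n⊕ = ν⊗ᴸ = ν⊗ᴿ`. -/
structure FrobFunctor (X : LDC C) (Y : LDC D) where
  F : C ⥤ D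
  mT : ∀ A B : C, Y.ot (F.obj A) (F.obj B) ⟶ F.obj (X.ot A B)
  mU : Y.tu ⟶ F.obj X.tu
  nP : ∀ A B : C, F.obj (X.op A B) ⟶ Y.op (F.obj A) (F.obj B)
  nU : F.obj X.pu ⟶ Y.pu
  laws : LinearFunctorLaws (X := X) (Y := Y) ⟨F, F, mT, mU, nP, nU, nP, nP, mT, mT⟩

/-- The linear-functor data underlying a Frobenius functor. -/
def FrobFunctor.data {X : LDC C} {Y : LDC D} (G : FrobFunctor X Y) : LinearFunctorData X Y :=
  ⟨G.F, G.F, G.mT, G.mU, G.nP, G.nU, G.nP, G.nP, G.mT, G.mT⟩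

/-- A mix functor between mix categories: a Frobenius functor satisfying
`n⊥ ; m ; m⊤ = F(m)` ([mix-FF]). -/
def IsMixFunctor {M : MixCat C} {N : MixCat D} (G : FrobFunctor M.X N.X) : Prop :=
  G.nU ≫ N.mix ≫ G.mU = G.F.map M.mix

/-- The isomix condition [isomix-FF] on a Frobenius functor between isomix categories:
`m⊤ ; F(m⁻¹) ; n⊥ = m⁻¹`. -/
def IsIsomixFunctor {M : IsomixCat C} {N : IsomixCat D}
    (G : FrobFunctor M.X N.X) : Prop :=
  G.mU ≫ G.F.map M.mixInv ≫ G.nU = N.mixInv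

/-- A linear transformation `α : F ⇒ G` between (the data of) linear functors: a
monoidal transformation `α⊗ : F⊗ ⇒ G⊗` and a comonoidal transformation
`α⊕ : G⊕ ⇒ F⊕` satisfying [LT.1]–[LT.4]. -/
structure LinearTransf {X : LDC C} {Y : LDC D} (F G : LinearFunctorData X Y) where
  aT : ∀ A : C, F.Ft.obj A ⟶ G.Ft.obj A
  aT_natural : ∀ {A B : C} (f : A ⟶ B), F.Ft.map f ≫ aT B = aT A ≫ G.Ft.map f
  aP : ∀ A : C, G.Fp.obj A ⟶ F.Fp.obj A
  aP_natural : ∀ {A B : C} (f : A ⟶ B), G.Fp.map f ≫ aP B = aP A ≫ F.Fp.map f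
  aT_tensor : ∀ A B : C,
    Y.oth (aT A) (aT B) ≫ G.mT A B = F.mT A B ≫ aT (X.ot A B)
  aT_unit : F.mU ≫ aT X.tu = G.mU
  aP_cotensor : ∀ A B : C,
    aP (X.op A B) ≫ F.nP A B = G.nP A B ≫ Y.oph (aP A) (aP B)
  aP_counit : aP X.pu ≫ F.nU = G.nU
  lt1 : ∀ A B : C,
    aT (X.op A B) ≫ G.vtR A B ≫ Y.oph (aP A) (𝟙 (G.Ft.obj B))
      = F.vtR A B ≫ Y.oph (𝟙 (F.Fp.obj A)) (aT B)
  lt2 : ∀ A B : C,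
    aT (X.op A B) ≫ G.vtL A B ≫ Y.oph (𝟙 (G.Ft.obj A)) (aP B)
      = F.vtL A B ≫ Y.oph (aT A) (𝟙 (F.Fp.obj B))
  lt3 : ∀ A B : C,
    Y.oth (𝟙 (G.Fp.obj A)) (aT B) ≫ G.vpL A B ≫ aP (X.ot A B)
      = Y.oth (aP A) (𝟙 (F.Ft.obj B)) ≫ F.vpL A B
  lt4 : ∀ A B : C,
    Y.oth (aT A) (𝟙 (G.Fp.obj B)) ≫ G.vpR A B ≫ aP (X.ot A B)
      = Y.oth (𝟙 (F.Ft.obj A)) (aP B) ≫ F.vpR A B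

/-- `(η, ε) : A ⊣⊣ B` is a linear dual in an LDC: `η : ⊤ ⟶ A ⊕ B` and
`ε : B ⊗ A ⟶ ⊥` satisfy the two snake identities. -/
def IsLinearDual (X : LDC C) (A B : C) (η : X.tu ⟶ X.op A B) (ε : X.ot B A ⟶ X.pu) : Prop :=
  ((X.luT A).inv ≫ X.oth η (𝟙 A) ≫ X.distR A B A ≫ X.oph (𝟙 A) ε ≫ (X.ruP A).hom = 𝟙 A) ∧
  ((X.ruT B).inv ≫ X.oth (𝟙 B) η ≫ X.distL B A B ≫ X.oph ε (𝟙 B) ≫ (X.luP B).hom = 𝟙 B)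

/-- The degenerate LDC on a single monoidal structure (tensor = par), with the
associator isomorphisms as linear distributors. -/
def LDC.deg (Mo : MonoidalCategory C) : LDC C where
  T := Mo
  P := Mo
  distL A B X := (Mo.associator A B X).inv
  distR A B X := (Mo.associator A B X).hom
  distL_natural := by
    intro A A' B B' X X' f g h
    rw [Iso.comp_inv_eq, Category.assoc, Mo.associator_naturality, Iso.inv_hom_id_assoc]
  distR_natural := by
    intro A A' B B' X X' f g h
    exact Mo.associator_naturality f g h

end Mix

attribute [reducible] FrobFunctor.data

section AuxProof

variable {C : Type u} [Category.{v} C] {D : Type u₂} [Category.{v₂} D]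

/-- naturality of the inverse right unitor against `f ⊗ 𝟙`. -/
private lemma mc_ruinv_nat (Mo : MonoidalCategory D) {A B : D} (f : A ⟶ B) :
    (Mo.rightUnitor A).inv ≫ Mo.tensorHom f (𝟙 Mo.tensorUnit)
      = f ≫ (Mo.rightUnitor B).inv := by
  have h1 : Mo.tensorHom f (𝟙 Mo.tensorUnit) = Mo.whiskerRight f Mo.tensorUnit := by
    rw [Mo.tensorHom_def, Mo.whiskerLeft_id, Category.comp_id]
  rw [h1, Iso.inv_comp_eq, ← Category.assoc, ← Mo.rightUnitor_naturality, Category.assoc,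
    Iso.hom_inv_id, Category.comp_id]

private lemma mc_exchange (Mo : MonoidalCategory D) {A B P : D} (f : A ⟶ B)
    (u : Mo.tensorUnit ⟶ P) :
    f ≫ (Mo.rightUnitor B).inv ≫ Mo.tensorHom (𝟙 B) u
      = (Mo.rightUnitor A).inv ≫ Mo.tensorHom (𝟙 A) u ≫ Mo.tensorHom f (𝟙 P) := by
  have e : Mo.tensorHom (𝟙 A) u ≫ Mo.tensorHom f (𝟙 P)
      = Mo.tensorHom f (𝟙 Mo.tensorUnit) ≫ Mo.tensorHom (𝟙 B) u := by
    rw [Mo.tensorHom_comp_tensorHom, Mo.tensorHom_comp_tensorHom, Category.id_comp, Category.comp_id,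
      Category.comp_id, Category.id_comp]
  have e2 : (Mo.rightUnitor A).inv ≫ Mo.tensorHom f (𝟙 Mo.tensorUnit)
      ≫ Mo.tensorHom (𝟙 B) u
      = (f ≫ (Mo.rightUnitor B).inv) ≫ Mo.tensorHom (𝟙 B) u := by
    rw [← Category.assoc, mc_ruinv_nat]
  rw [e, e2, Category.assoc]

variable {M : IsomixCat C} {N : IsomixCat D}

/-- `u_H := m⊤ ; H(m⁻¹)` is split by `p_H := n⊥ ; m` : the forward composite. -/
private lemma frob_u_p (H : FrobFunctor M.X N.X)
    (h' : IsIsomixFunctor (M := M) (N := N) H) :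
    (H.mU ≫ H.F.map M.mixInv) ≫ (H.nU ≫ N.mix) = 𝟙 N.X.tu := by
  have hiso : H.mU ≫ H.F.map M.mixInv ≫ H.nU = N.mixInv := h'
  calc (H.mU ≫ H.F.map M.mixInv) ≫ (H.nU ≫ N.mix)
      = (H.mU ≫ H.F.map M.mixInv ≫ H.nU) ≫ N.mix := by
        simp only [Category.assoc]
    _ = N.mixInv ≫ N.mix := by rw [hiso]
    _ = 𝟙 N.X.tu := N.mixInv_mix

/-- `p_H ; u_H = 𝟙` : the backward composite. -/
private lemma frob_p_u (H : FrobFunctor M.X N.X)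
    (h : IsMixFunctor (M := M.toMixCat) (N := N.toMixCat) H) :
    (H.nU ≫ N.mix) ≫ (H.mU ≫ H.F.map M.mixInv) = 𝟙 (H.F.obj M.X.pu) := by
  have hmix : H.nU ≫ N.mix ≫ H.mU = H.F.map M.mix := h
  calc (H.nU ≫ N.mix) ≫ (H.mU ≫ H.F.map M.mixInv)
      = (H.nU ≫ N.mix ≫ H.mU) ≫ H.F.map M.mixInv := by
        simp only [Category.assoc]
    _ = H.F.map M.mix ≫ H.F.map M.mixInv := by rw [hmix]
    _ = 𝟙 (H.F.obj M.X.pu) := by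
        rw [← H.F.map_comp, M.mix_mixInv, H.F.map_id]

/-- The unit comparison `ρ⁻¹ ; (1 ⊗ u_H) ; m⊗ = H(ρ⁻¹ ; (1 ⊗ m⁻¹))`. -/
private lemma frob_unit_tensor (H : FrobFunctor M.X N.X) (A : C) :
    (N.X.ruT (H.F.obj A)).inv
        ≫ N.X.oth (𝟙 (H.F.obj A)) (H.mU ≫ H.F.map M.mixInv)
        ≫ H.mT A M.X.pu
      = H.F.map ((M.X.ruT A).inv ≫ M.X.oth (𝟙 A) M.mixInv) := by
  have hnat : N.X.oth (H.F.map (𝟙 A)) (H.F.map M.mixInv) ≫ H.mT A M.X.pu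
      = H.mT A M.X.tu ≫ H.F.map (M.X.oth (𝟙 A) M.mixInv) :=
    H.laws.mT_natural (𝟙 A) M.mixInv
  have hlf : (N.X.ruT (H.F.obj A)).inv ≫ N.X.oth (𝟙 (H.F.obj A)) H.mU
      ≫ H.mT A M.X.tu = H.F.map (M.X.ruT A).inv := H.laws.lf1d A
  have e1 : N.X.oth (𝟙 (H.F.obj A)) (H.mU ≫ H.F.map M.mixInv)
      = N.X.oth (𝟙 (H.F.obj A)) H.mU
          ≫ N.X.oth (H.F.map (𝟙 A)) (H.F.map M.mixInv) := by
    rw [N.X.T.tensorHom_comp_tensorHom, H.F.map_id, Category.comp_id]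
  rw [e1, Category.assoc, hnat, ← Category.assoc, ← Category.assoc, Category.assoc _ _ (H.mT A M.X.tu), hlf, ← H.F.map_comp]

/-- The value of `α⊕` at `⊥`. -/
private lemma aP_bot (F G : FrobFunctor M.X N.X)
    (hF : IsMixFunctor (M := M.toMixCat) (N := N.toMixCat) F)
    (α : LinearTransf F.data G.data) :
    α.aP M.X.pu = (G.nU ≫ N.mix) ≫ (F.mU ≫ F.F.map M.mixInv) := by
  have hc : α.aP M.X.pu ≫ F.nU = G.nU := α.aP_counit
  have e0 : α.aP M.X.pu = α.aP M.X.pu ≫ 𝟙 (F.F.obj M.X.pu) := (Category.comp_id _).symm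
  calc α.aP M.X.pu
      = α.aP M.X.pu ≫ (F.nU ≫ N.mix) ≫ (F.mU ≫ F.F.map M.mixInv) := by
        rw [frob_p_u F hF]; exact e0
    _ = ((α.aP M.X.pu ≫ F.nU) ≫ N.mix) ≫ (F.mU ≫ F.F.map M.mixInv) := by
        simp only [Category.assoc]
    _ = (G.nU ≫ N.mix) ≫ (F.mU ≫ F.F.map M.mixInv) := by rw [hc]

/-- Main computation: `α⊗ ; α⊕ = 𝟙` at every object. -/
private lemma aT_comp_aP (F G : FrobFunctor M.X N.X)
    (hF : IsMixFunctor (M := M.toMixCat) (N := N.toMixCat) F)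
    (hG' : IsIsomixFunctor (M := M) (N := N) G)
    (α : LinearTransf F.data G.data) (A : C) :
    α.aT A ≫ α.aP A = 𝟙 (F.F.obj A) := by
  -- abbreviations
  set uF : N.X.tu ⟶ F.F.obj M.X.pu := F.mU ≫ F.F.map M.mixInv with huF
  set uG : N.X.tu ⟶ G.F.obj M.X.pu := G.mU ≫ G.F.map M.mixInv with huG
  have hGu : uG ≫ α.aP M.X.pu = uF := by
    rw [aP_bot F G hF α, ← Category.assoc, huG, frob_u_p G hG', Category.id_comp, huF]
  -- the iso h : A ⟶ A ⊗ ⊥ in the domain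
  set h : A ⟶ M.X.ot A M.X.pu := (M.X.ruT A).inv ≫ M.X.oth (𝟙 A) M.mixInv with hh
  set h' : M.X.ot A M.X.pu ⟶ A := M.X.oth (𝟙 A) M.mix ≫ (M.X.ruT A).hom with hh'
  have hhh : h ≫ h' = 𝟙 A := by
    rw [hh, hh', Category.assoc, ← Category.assoc (M.X.oth (𝟙 A) M.mixInv),
      M.X.T.tensorHom_comp_tensorHom, Category.comp_id, M.mixInv_mix, M.X.T.id_tensorHom_id,
      Category.id_comp, Iso.inv_hom_id]
  -- clean restatements of the linear-transformation data (definitional unfolding of `.data`)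
  have aPnat : ∀ {A B : C} (f : A ⟶ B), G.F.map f ≫ α.aP B = α.aP A ≫ F.F.map f :=
    fun f => α.aP_natural f
  have lt4' : ∀ A B : C,
      N.X.oth (α.aT A) (𝟙 (G.F.obj B)) ≫ G.mT A B ≫ α.aP (M.X.ot A B)
        = N.X.oth (𝟙 (F.F.obj A)) (α.aP B) ≫ F.mT A B := fun A B => α.lt4 A B
  -- the key equation
  have key : α.aT A ≫ α.aP A ≫ F.F.map h = F.F.map h := by
    calc α.aT A ≫ α.aP A ≫ F.F.map h
        = α.aT A ≫ G.F.map h ≫ α.aP (M.X.ot A M.X.pu) := by rw [aPnat h]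
      _ = α.aT A ≫ ((N.X.ruT (G.F.obj A)).inv ≫ N.X.oth (𝟙 (G.F.obj A)) uG
            ≫ G.mT A M.X.pu) ≫ α.aP (M.X.ot A M.X.pu) := by
          rw [frob_unit_tensor G A]
      _ = (α.aT A ≫ (N.X.ruT (G.F.obj A)).inv ≫ N.X.oth (𝟙 (G.F.obj A)) uG)
            ≫ G.mT A M.X.pu ≫ α.aP (M.X.ot A M.X.pu) := by
          simp only [Category.assoc]
      _ = ((N.X.ruT (F.F.obj A)).inv ≫ N.X.oth (𝟙 (F.F.obj A)) uG
            ≫ N.X.oth (α.aT A) (𝟙 (G.F.obj M.X.pu)))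
            ≫ G.mT A M.X.pu ≫ α.aP (M.X.ot A M.X.pu) := by
          rw [mc_exchange (A := F.F.obj A) (B := G.F.obj A) N.X.T (α.aT A) uG]
      _ = (N.X.ruT (F.F.obj A)).inv ≫ N.X.oth (𝟙 (F.F.obj A)) uG
            ≫ (N.X.oth (α.aT A) (𝟙 (G.F.obj M.X.pu))
              ≫ G.mT A M.X.pu ≫ α.aP (M.X.ot A M.X.pu)) := by
          simp only [Category.assoc]
      _ = (N.X.ruT (F.F.obj A)).inv ≫ N.X.oth (𝟙 (F.F.obj A)) uG
            ≫ (N.X.oth (𝟙 (F.F.obj A)) (α.aP M.X.pu) ≫ F.mT A M.X.pu) := by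
          rw [lt4' A M.X.pu]
      _ = (N.X.ruT (F.F.obj A)).inv ≫ N.X.oth (𝟙 (F.F.obj A)) (uG ≫ α.aP M.X.pu)
            ≫ F.mT A M.X.pu := by
          rw [← Category.assoc (N.X.oth (𝟙 (F.F.obj A)) uG), N.X.T.tensorHom_comp_tensorHom,
            Category.comp_id]
      _ = (N.X.ruT (F.F.obj A)).inv ≫ N.X.oth (𝟙 (F.F.obj A)) uF ≫ F.mT A M.X.pu := by
          rw [hGu]
      _ = F.F.map h := frob_unit_tensor F A
  -- cancel the iso `F(h)` on the right
  have key2 := congrArg (fun z => z ≫ F.F.map h') key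
  simp only [Category.assoc] at key2
  rw [← F.F.map_comp, hhh, F.F.map_id] at key2
  have e3 : α.aP A ≫ 𝟙 (F.F.obj A) = α.aP A := Category.comp_id _
  rw [e3] at key2
  exact key2

end AuxProof

/-!
STATEMENT 7: For isomix Frobenius functors `F, G : X → Y` between isomix categories,
a linear transformation `α = (α⊗, α⊕) : F ⇒ G` is a linear natural isomorphism
(i.e. `α⊗` is an isomorphism) if and only if `α⊗ = α⊕⁻¹`.
-/
theorem isomix_frobenius_linear_iso_iff
    {C : Type u} [Category.{v} C] {D : Type u₂} [Category.{v₂} D]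
    {M : IsomixCat C} {N : IsomixCat D}
    (F G : FrobFunctor M.X N.X)
    (hF : IsMixFunctor (M := M.toMixCat) (N := N.toMixCat) F)
    (hF' : IsIsomixFunctor (M := M) (N := N) F)
    (hG : IsMixFunctor (M := M.toMixCat) (N := N.toMixCat) G)
    (hG' : IsIsomixFunctor (M := M) (N := N) G)
    (α : LinearTransf F.data G.data) :
    (∀ A : C, IsIso (α.aT A)) ↔
      (∀ A : C, α.aT A ≫ α.aP A = 𝟙 (F.F.obj A) ∧ α.aP A ≫ α.aT A = 𝟙 (G.F.obj A)) := by
  constructor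
  · intro hiso A
    have h1 : α.aT A ≫ α.aP A = 𝟙 (F.F.obj A) := aT_comp_aP F G hF hG' α A
    refine ⟨h1, ?_⟩
    haveI := hiso A
    have h2 : α.aP A = inv (α.aT A) := IsIso.eq_inv_of_hom_inv_id h1
    rw [h2, IsIso.inv_hom_id]
  · intro h A
    exact ⟨α.aP A, (h A).1, (h A).2⟩
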